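/- Let α > 0, let k be a positive integer, and let G be a graph that is a (k,α)-expander. Then G is a (3k/2, α/6)-expander, or there is a vertex subset V₀ ⊆ V(G) of size |V₀| ≥ 2k/3 such that the induced subgraph G[V₀] is an (α/2)-expander. -/
import Mathlib


open scoped Classical

/-- The external neighborhood of a vertex set `U` in a simple graph `G`:
all vertices outside `U` having a neighbor in `U`. -/
def SimpleGraph.extNb {V : Type*} (G : SimpleGraph V) (U : Set V) : Set V :=
  {v | v ∉ U ∧ ∃ u ∈ U, G.Adj u v}

/-- A graph `G` on `n` vertices is an `α`-expander if every vertex subset `U` with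
`|U| ≤ n/2` satisfies `|N_G(U)| ≥ α |U|`. -/
def SimpleGraph.IsExpander {V : Type*} [Fintype V] (G : SimpleGraph V) (α : ℝ) : Prop :=
  ∀ U : Set V, (U.ncard : ℝ) ≤ (Fintype.card V : ℝ) / 2 →
    α * U.ncard ≤ ((G.extNb U).ncard : ℝ)

/-- `G` is a `(k, α)`-expander if every vertex subset `U` with `|U| ≤ k`
satisfies `|N_G(U)| ≥ α |U|`. -/
def SimpleGraph.IsKExpander {V : Type*} (G : SimpleGraph V) (k α : ℝ) : Prop :=
  ∀ U : Set V, (U.ncard : ℝ) ≤ k → α * U.ncard ≤ ((G.extNb U).ncard : ℝ)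

/-- neighbors of `S` inside `W`, external to `S` -/
def nbIn {V : Type*} (G : SimpleGraph V) (W S : Set V) : Set V :=
  {v | v ∈ W ∧ v ∉ S ∧ ∃ u ∈ S, G.Adj u v}

lemma image_extNb {V : Type*} (G : SimpleGraph V) (W : Set V) (S : Set ↥W) :
    Subtype.val '' ((G.induce W).extNb S) = nbIn G W (Subtype.val '' S) := by
  ext v
  simp only [SimpleGraph.extNb, nbIn, Set.mem_image, Set.mem_setOf_eq,
    SimpleGraph.comap_adj, Function.Embedding.coe_subtype]
  constructor
  · rintro ⟨⟨v, hvW⟩, ⟨hvS, ⟨u, huS, hadj⟩⟩, rfl⟩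
    refine ⟨hvW, ?_, ⟨u, ⟨u, huS, rfl⟩, hadj⟩⟩
    rintro ⟨x, hxS, hxv⟩
    exact hvS (by cases x; cases hxv; exact hxS)
  · rintro ⟨hvW, hvS, u, ⟨u', hu'S, rfl⟩, hadj⟩
    exact ⟨⟨v, hvW⟩, ⟨fun hmem => hvS ⟨_, hmem, rfl⟩, ⟨u', hu'S, hadj⟩⟩, rfl⟩

lemma extNb_subset_split {V : Type*} (G : SimpleGraph V) {U D : Set V} (hDU : D ⊆ U) :
    G.extNb D ⊆ nbIn G U D ∪ G.extNb U := by
  rintro v ⟨hvD, u, huD, hadj⟩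
  by_cases hvU : v ∈ U
  · exact Or.inl ⟨hvU, hvD, u, huD, hadj⟩
  · exact Or.inr ⟨hvU, u, hDU huD, hadj⟩

lemma nbIn_union_split {V : Type*} (G : SimpleGraph V) (U D S : Set V) :
    nbIn G U (D ∪ S) ⊆ nbIn G U D ∪ nbIn G (U \ D) S := by
  rintro v ⟨hvU, hvDS, u, huDS, hadj⟩
  rcases huDS with huD | huS
  · exact Or.inl ⟨hvU, fun h => hvDS (Or.inl h), u, huD, hadj⟩
  · exact Or.inr ⟨⟨hvU, fun h => hvDS (Or.inl h)⟩, fun h => hvDS (Or.inr h), u, huS, hadj⟩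

lemma expander_of_nbIn {V : Type*} [Fintype V] (G : SimpleGraph V) (β : ℝ) (W : Set V)
    (hgood : ∀ S ⊆ W, (S.ncard : ℝ) ≤ (W.ncard : ℝ) / 2 → β * S.ncard ≤ ((nbIn G W S).ncard : ℝ)) :
    (G.induce W).IsExpander β := by
  intro S hScard
  have hcardW : (Fintype.card ↥W : ℝ) = (W.ncard : ℝ) := by
    rw [← Nat.card_eq_fintype_card, Nat.card_coe_set_eq]
  have hScard' : (Subtype.val '' S).ncard = S.ncard :=
    Set.ncard_image_of_injective _ Subtype.val_injective
  have hNcard : ((G.induce W).extNb S).ncard = (nbIn G W (Subtype.val '' S)).ncard := by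
    rw [← image_extNb, Set.ncard_image_of_injective _ Subtype.val_injective]
  have hsub : Subtype.val '' S ⊆ W := by
    rintro v ⟨x, hx, rfl⟩; exact x.2
  have happ := hgood (Subtype.val '' S) hsub
    (by rw [hScard']; rw [hcardW] at hScard; exact hScard)
  rw [hScard'] at happ
  rw [hNcard]
  exact happ

theorem stmt_1 {V : Type*} [Fintype V] (G : SimpleGraph V) (α : ℝ) (hα : 0 < α)
    (k : ℕ) (hk : 0 < k) (h : G.IsKExpander k α) :
    G.IsKExpander (3 * k / 2) (α / 6) ∨
      ∃ V₀ : Set V, 2 * (k : ℝ) / 3 ≤ (V₀.ncard : ℝ) ∧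
        (G.induce V₀).IsExpander (α / 2) := by
  by_cases hexp : G.IsKExpander (3 * k / 2) (α / 6)
  · exact Or.inl hexp
  right
  rw [SimpleGraph.IsKExpander] at hexp
  push_neg at hexp
  obtain ⟨U, hU1, hU2⟩ := hexp
  -- |U| > k
  have hUk : (k : ℝ) < U.ncard := by
    by_contra hle
    push_neg at hle
    have h1 := h U hle
    have h0 : (0:ℝ) ≤ (U.ncard : ℝ) := Nat.cast_nonneg _
    nlinarith
  -- key size bound: any D ⊆ U with small internal boundary and |D| ≤ k has |D| < |U|/3
  have sizeD : ∀ D : Set V, D ⊆ U → (D.ncard : ℝ) ≤ k →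
      ((nbIn G U D).ncard : ℝ) ≤ α / 2 * D.ncard → (D.ncard : ℝ) < U.ncard / 3 := by
    intro D hDU hDk hinv
    have h1 := h D hDk
    have hsub := extNb_subset_split G hDU
    have h2 : (G.extNb D).ncard ≤ (nbIn G U D).ncard + (G.extNb U).ncard :=
      le_trans (Set.ncard_le_ncard hsub (Set.toFinite _)) (Set.ncard_union_le _ _)
    have h2' : ((G.extNb D).ncard : ℝ) ≤ ((nbIn G U D).ncard : ℝ) + ((G.extNb U).ncard : ℝ) := by
      exact_mod_cast h2
    nlinarith
  -- pruning induction
  have prune : ∀ n : ℕ, ∀ D : Set V, D ⊆ U → (U \ D).ncard ≤ n →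
      ((nbIn G U D).ncard : ℝ) ≤ α / 2 * D.ncard → (D.ncard : ℝ) ≤ k →
      ∃ D', D' ⊆ U ∧ ((nbIn G U D').ncard : ℝ) ≤ α / 2 * D'.ncard ∧ (D'.ncard : ℝ) ≤ k ∧
        ∀ S ⊆ U \ D', (S.ncard : ℝ) ≤ ((U \ D').ncard : ℝ) / 2 →
          α / 2 * S.ncard ≤ ((nbIn G (U \ D') S).ncard : ℝ) := by
    intro n
    induction n with
    | zero =>
      intro D hDU hn hinv hDk
      refine ⟨D, hDU, hinv, hDk, ?_⟩
      intro S hS _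
      have : S.ncard = 0 := by
        have := Set.ncard_le_ncard hS (Set.toFinite _)
        omega
      rw [this]
      simp [Nat.cast_nonneg]
    | succ n ih =>
      intro D hDU hn hinv hDk
      by_cases hgood : ∀ S ⊆ U \ D, (S.ncard : ℝ) ≤ ((U \ D).ncard : ℝ) / 2 →
          α / 2 * S.ncard ≤ ((nbIn G (U \ D) S).ncard : ℝ)
      · exact ⟨D, hDU, hinv, hDk, hgood⟩
      push_neg at hgood
      obtain ⟨S, hS1, hS2, hS3⟩ := hgood
      have hSne : 0 < S.ncard := by
        rcases Nat.eq_zero_or_pos S.ncard with h0 | h0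
        · exfalso
          rw [h0] at hS3
        -- hS3 : (nbIn ...).ncard < α/2 * 0
          simp at hS3
          have : (0:ℝ) ≤ ((nbIn G (U \ D) S).ncard : ℝ) := Nat.cast_nonneg _
          linarith
        · exact h0
      -- disjointness facts
      have hSD : Disjoint D S := by
        refine Set.disjoint_left.mpr fun v hvD hvS => ?_
        exact (hS1 hvS).2 hvD
      have hDScard : (D ∪ S).ncard = D.ncard + S.ncard :=
        Set.ncard_union_eq hSD (Set.toFinite _) (Set.toFinite _)
      have hDSU : D ∪ S ⊆ U := Set.union_subset hDU (hS1.trans Set.diff_subset)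
      -- cardinality of U \ D
      have hUD : ((U \ D).ncard : ℝ) = (U.ncard : ℝ) - D.ncard := by
        rw [Set.ncard_diff hDU (Set.toFinite _)]
        exact Nat.cast_sub (Set.ncard_le_ncard hDU (Set.toFinite _))
      -- new invariant
      have hinv' : ((nbIn G U (D ∪ S)).ncard : ℝ) ≤ α / 2 * (D ∪ S).ncard := by
        have hsub := nbIn_union_split G U D S
        have h2 : (nbIn G U (D ∪ S)).ncard ≤ (nbIn G U D).ncard + (nbIn G (U \ D) S).ncard :=
          le_trans (Set.ncard_le_ncard hsub (Set.toFinite _)) (Set.ncard_union_le _ _)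
        have h2' : ((nbIn G U (D ∪ S)).ncard : ℝ) ≤
            ((nbIn G U D).ncard : ℝ) + ((nbIn G (U \ D) S).ncard : ℝ) := by exact_mod_cast h2
        have : ((D ∪ S).ncard : ℝ) = (D.ncard : ℝ) + S.ncard := by exact_mod_cast hDScard
        nlinarith
      -- new size bound
      have hsz : (D.ncard : ℝ) < U.ncard / 3 := sizeD D hDU hDk hinv
      have hDSk : ((D ∪ S).ncard : ℝ) ≤ k := by
        have : ((D ∪ S).ncard : ℝ) = (D.ncard : ℝ) + S.ncard := by exact_mod_cast hDScard
        rw [this]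
        nlinarith
      -- decrease
      have hdec : (U \ (D ∪ S)).ncard ≤ n := by
        have heq : U \ (D ∪ S) = (U \ D) \ S := (Set.diff_diff).symm
        rw [heq, Set.ncard_diff hS1 (Set.toFinite _)]
        omega
      exact ih (D ∪ S) hDSU hdec hinv' hDSk
  -- run the pruning from ∅
  obtain ⟨D', hD'U, hinv', hD'k, hgood⟩ := prune (U \ ∅).ncard ∅ (Set.empty_subset _) le_rfl
    (by simp [nbIn]) (by simp)
  have hsz : (D'.ncard : ℝ) < U.ncard / 3 := sizeD D' hD'U hD'k hinv'
  refine ⟨U \ D', ?_, ?_⟩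
  · have hUD : ((U \ D').ncard : ℝ) = (U.ncard : ℝ) - D'.ncard := by
      rw [Set.ncard_diff hD'U (Set.toFinite _)]
      exact Nat.cast_sub (Set.ncard_le_ncard hD'U (Set.toFinite _))
    rw [hUD]
    nlinarith
  · exact expander_of_nbIn G (α / 2) (U \ D') hgood
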